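/- CHSH inequality for local realistic theories: let μ be a probability measure on a measurable space Ω, and let A, A', B, B' : Ω → ℝ be measurable functions with |A(λ)| ≤ 1, |A'(λ)| ≤ 1, |B(λ)| ≤ 1, |B'(λ)| ≤ 1 for all λ. Then |∫ A·B dμ − ∫ A·B' dμ + ∫ A'·B' dμ + ∫ A'·B dμ| ≤ 2. -/

import Mathlib

open MeasureTheory

lemma chsh_integrable {Ω : Type*} [MeasurableSpace Ω] (μ : Measure Ω) [IsProbabilityMeasure μ]
    (f g : Ω → ℝ) (hf : Measurable f) (hg : Measurable g)
    (hfb : ∀ l, |f l| ≤ 1) (hgb : ∀ l, |g l| ≤ 1) :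
    Integrable (fun l => f l * g l) μ := by
  apply Integrable.mono' (integrable_const 1) ((hf.mul hg).aestronglyMeasurable)
  filter_upwards with l
  rw [Real.norm_eq_abs, Pi.mul_apply, abs_mul]
  exact mul_le_one₀ (hfb l) (abs_nonneg _) (hgb l)

/-- CHSH inequality for local realistic theories: for a probability measure μ
and measurable observables A, A', B, B' bounded by 1 in absolute value,
`|E(a,b) − E(a,b') + E(a',b') + E(a',b)| ≤ 2`. -/
theorem stmt6 {Ω : Type*} [MeasurableSpace Ω] (μ : Measure Ω) [IsProbabilityMeasure μ]
    (A A' B B' : Ω → ℝ)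
    (hA : Measurable A) (hA' : Measurable A') (hB : Measurable B) (hB' : Measurable B')
    (hAb : ∀ l, |A l| ≤ 1) (hA'b : ∀ l, |A' l| ≤ 1)
    (hBb : ∀ l, |B l| ≤ 1) (hB'b : ∀ l, |B' l| ≤ 1) :
    |(∫ l, A l * B l ∂μ) - (∫ l, A l * B' l ∂μ) +
        (∫ l, A' l * B' l ∂μ) + (∫ l, A' l * B l ∂μ)| ≤ 2 := by
  have i1 := chsh_integrable μ A B hA hB hAb hBb
  have i2 := chsh_integrable μ A B' hA hB' hAb hB'b
  have i3 := chsh_integrable μ A' B' hA' hB' hA'b hB'b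
  have i4 := chsh_integrable μ A' B hA' hB hA'b hBb
  have key : (∫ l, A l * B l ∂μ) - (∫ l, A l * B' l ∂μ) +
      (∫ l, A' l * B' l ∂μ) + (∫ l, A' l * B l ∂μ) =
      ∫ l, (A l * B l - A l * B' l + A' l * B' l + A' l * B l) ∂μ := by
    have i12 : Integrable (fun a => A a * B a - A a * B' a) μ := i1.sub i2
    have i123 : Integrable (fun a => A a * B a - A a * B' a + A' a * B' a) μ := i12.add i3
    rw [← integral_sub i1 i2, ← integral_add i12 i3, ← integral_add i123 i4]
  rw [key, ← Real.norm_eq_abs]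
  have := norm_integral_le_of_norm_le_const (μ := μ)
    (f := fun l => A l * B l - A l * B' l + A' l * B' l + A' l * B l) (C := 2) ?_
  · simpa using this
  · filter_upwards with l
    rw [Real.norm_eq_abs]
    have e : A l * B l - A l * B' l + A' l * B' l + A' l * B l =
        A l * (B l - B' l) + A' l * (B l + B' l) := by ring
    rw [e]
    have h5 : |A l * (B l - B' l) + A' l * (B l + B' l)| ≤ |B l - B' l| + |B l + B' l| := by
      calc |A l * (B l - B' l) + A' l * (B l + B' l)|
          ≤ |A l * (B l - B' l)| + |A' l * (B l + B' l)| := abs_add_le _ _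
        _ = |A l| * |B l - B' l| + |A' l| * |B l + B' l| := by rw [abs_mul, abs_mul]
        _ ≤ 1 * |B l - B' l| + 1 * |B l + B' l| := by
            gcongr <;> [exact hAb l; exact hA'b l]
        _ = |B l - B' l| + |B l + B' l| := by ring
    have h6 : |B l - B' l| + |B l + B' l| ≤ 2 := by
      have h3 := abs_le.mp (hBb l); have h4 := abs_le.mp (hB'b l)
      rcases abs_cases (B l - B' l) with ⟨hc1, _⟩ | ⟨hc1, _⟩ <;>
        rcases abs_cases (B l + B' l) with ⟨hc2, _⟩ | ⟨hc2, _⟩ <;> linarith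
    linarith
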